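/- The translation tr₂ from L_KC to L′_KC, defined by the clauses tr₂(Y=y) = []Y=y; tr₂(¬ξ) = ¬tr₂(ξ); tr₂(ξ₁∧ξ₂) = tr₂(ξ₁)∧tr₂(ξ₂); tr₂(Kξ) = K tr₂(ξ); tr₂([X⃗:=x⃗]Y=y) = [X⃗:=x⃗]Y=y; tr₂([X⃗:=x⃗]¬ξ) = tr₂(¬[X⃗:=x⃗]ξ); tr₂([X⃗:=x⃗](ξ₁∧ξ₂)) = tr₂([X⃗:=x⃗]ξ₁ ∧ [X⃗:=x⃗]ξ₂); tr₂([X⃗:=x⃗]Kξ) = tr₂(K[X⃗:=x⃗]ξ); tr₂([X⃗:=x⃗][Y⃗:=y⃗]ξ) = tr₂([X⃗′:=x⃗′, Y⃗:=y⃗]ξ) with X⃗′ = X⃗ \ Y⃗, is well defined and satisfies, for every L_KC formula ξ: (1) tr₂(ξ) ∈ L′_KC; (2) ξ ↔ tr₂(ξ) is provable in the system L_KC; (3) ξ ↔ tr₂(ξ) is valid over epistemic recursive causal models. -/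

import Mathlib

open Classical

/-- A finite signature: variables sorted into exogenous and endogenous, each with a
finite nonempty range of values. -/
structure Sig : Type 1 where
  Var : Type
  exo : Var → Prop
  Val : Var → Type
  [decEqVar : DecidableEq Var]
  [finVar : Fintype Var]
  [neVar : Nonempty Var]
  [decEqVal : ∀ X : Var, DecidableEq (Val X)]
  [finVal : ∀ X : Var, Fintype (Val X)]
  [neVal : ∀ X : Var, Nonempty (Val X)]

attribute [instance] Sig.decEqVar Sig.finVar Sig.neVar Sig.decEqVal Sig.finVal Sig.neVal

variable {S : Sig}

/-- A valuation: a value for each variable. -/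
abbrev Env (S : Sig) : Type := ∀ X : S.Var, S.Val X

instance : Nonempty (Env S) := ⟨fun X => Classical.arbitrary (S.Val X)⟩

/-- Values for all variables other than `V`. -/
abbrev Others (S : Sig) (V : S.Var) : Type := ∀ X : {X : S.Var // X ≠ V}, S.Val X.val

/-- The restriction of a valuation to the variables other than `V`. -/
def Env.restrict (A : Env S) (V : S.Var) : Others S V := fun X => A X.val

/-- A family of structural functions (only the components at endogenous variables
are meaningful). -/
abbrev StructFuns (S : Sig) : Type := ∀ V : S.Var, Others S V → S.Val V

/-- A valuation complies with the structural functions: the value of each endogenous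
variable is obtained by applying its structural function to the values of all
other variables. -/
def Complies (F : StructFuns S) (A : Env S) : Prop :=
  ∀ V : S.Var, ¬ S.exo V → A V = F V (A.restrict V)

/-- The endogenous variable `V` is directly causally affected by `X` under `F`. -/
def DirAff (F : StructFuns S) (X V : S.Var) : Prop :=
  ¬ S.exo V ∧ ∃ (h : X ≠ V) (g : Others S V) (x₁ x₂ : S.Val X),
    x₁ ≠ x₂ ∧
      F V (Function.update g ⟨X, h⟩ x₁) ≠ F V (Function.update g ⟨X, h⟩ x₂)

/-- `F` is recursive: the transitive closure of the direct causal dependence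
relation is asymmetric (transitivity is automatic for `Relation.TransGen`). -/
def RecursiveF (F : StructFuns S) : Prop :=
  ∀ a b : S.Var, Relation.TransGen (DirAff F) a b → ¬ Relation.TransGen (DirAff F) b a

/-- An assignment of values to a set of pairwise distinct variables. -/
abbrev Intervention (S : Sig) : Type := ∀ X : S.Var, Option (S.Val X)

/-- The empty assignment. -/
def iEmpty (S : Sig) : Intervention S := fun _ => none

/-- Extend an assignment by additionally setting `Y` to `y` (overriding). -/
def iUpd (I : Intervention S) (Y : S.Var) (y : S.Val Y) : Intervention S :=
  Function.update I Y (some y)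

/-- Combine assignments, the second overriding the first:  `[X⃗ := x⃗, Y⃗ := y⃗]`. -/
def icomp (I J : Intervention S) : Intervention S := fun W =>
  match J W with
  | some v => some v
  | none => I W

/-- The intervened family of structural functions: intervened variables get the
constant function returning the assigned value; the rest are unchanged. -/
def intF (F : StructFuns S) (I : Intervention S) : StructFuns S :=
  fun V g => (I V).getD (F V g)

/-- `A'` is the result of intervening with `I` on the valuation `A` (w.r.t. `F`):
exogenous intervened variables get the assigned value, exogenous non-intervened
variables keep their value, and each endogenous variable complies with its new
structural function. -/
def IntervenedVal (F : StructFuns S) (A : Env S) (I : Intervention S) (A' : Env S) : Prop :=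
  (∀ X : S.Var, S.exo X → ∀ v : S.Val X, I X = some v → A' X = v) ∧
  (∀ X : S.Var, S.exo X → I X = none → A' X = A X) ∧
  (∀ V : S.Var, ¬ S.exo V → A' V = intF F I V (A'.restrict V))

/-- The intervened valuation (unique when `F` is recursive). -/
noncomputable def intVal (F : StructFuns S) (A : Env S) (I : Intervention S) : Env S :=
  Classical.epsilon (IntervenedVal F A I)

/-- The language L_KC: atoms `Y = y`, negation, conjunction, knowledge, and
interventionist counterfactual operators. -/
inductive Form (S : Sig) : Type where
  | eq (Y : S.Var) (y : S.Val Y) : Form S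
  | neg (φ : Form S) : Form S
  | conj (φ ψ : Form S) : Form S
  | know (φ : Form S) : Form S
  | int (I : Intervention S) (φ : Form S) : Form S

namespace Form

/-- Material implication, defined from `¬` and `∧` as usual. -/
def impl (φ ψ : Form S) : Form S := Form.neg (Form.conj φ (Form.neg ψ))

/-- Disjunction, defined from `¬` and `∧` as usual. -/
def orF (φ ψ : Form S) : Form S := Form.neg (Form.conj (Form.neg φ) (Form.neg ψ))

/-- Biconditional. -/
def iffF (φ ψ : Form S) : Form S := Form.conj (impl φ ψ) (impl ψ φ)

end Form

/-- A canonical contradiction. -/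
noncomputable def botF (S : Sig) : Form S :=
  let X : S.Var := Classical.arbitrary S.Var
  let x : S.Val X := Classical.arbitrary (S.Val X)
  Form.conj (Form.eq X x) (Form.neg (Form.eq X x))

/-- A canonical tautology. -/
noncomputable def topF (S : Sig) : Form S := Form.neg (botF S)

/-- Disjunction of a list of formulas (the empty disjunction is a contradiction). -/
noncomputable def bigOr : List (Form S) → Form S
  | [] => botF S
  | φ :: l => l.foldl Form.orF φ

/-- Conjunction of a list of formulas (the empty conjunction is a tautology). -/
noncomputable def bigConj : List (Form S) → Form S
  | [] => topF S
  | φ :: l => l.foldl Form.conj φ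

/-- `φ` is an instance of a propositional tautology: it evaluates to `true` under
every Boolean valuation that respects negation and conjunction (treating all
other formulas as atoms). -/
def Tauto (φ : Form S) : Prop :=
  ∀ v : Form S → Bool,
    (∀ ψ : Form S, v (Form.neg ψ) = !(v ψ)) →
    (∀ ψ χ : Form S, v (Form.conj ψ χ) = (v ψ && v χ)) →
    v φ = true

/-- The assignment `[Z⃗ := z⃗, X := x]` where `Z⃗` lists all variables other than
`X` and `V`, used in the formula `X ⇝ V`. -/
def ltInt (X V : S.Var) (g : ∀ W : {W : S.Var // W ≠ X ∧ W ≠ V}, S.Val W.val)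
    (x : S.Val X) : Intervention S := fun W =>
  if h : W = X then some (h.symm ▸ x)
  else if h' : W = V then none
  else some (g ⟨W, ⟨h, h'⟩⟩)

/-- The formula `X ⇝ V`: the disjunction, over tuples `z⃗` of values for all
variables other than `X` and `V`, distinct values `x₁ ≠ x₂` of `X` and distinct
values `v₁ ≠ v₂` of `V`, of `[Z⃗:=z⃗, X:=x₁]V=v₁ ∧ [Z⃗:=z⃗, X:=x₂]V=v₂`. -/
noncomputable def leadsTo (X V : S.Var) : Form S :=
  bigOr ((Finset.univ.filter
      (fun p : (∀ W : {W : S.Var // W ≠ X ∧ W ≠ V}, S.Val W.val) ×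
          (S.Val X × S.Val X) × (S.Val V × S.Val V) =>
        p.2.1.1 ≠ p.2.1.2 ∧ p.2.2.1 ≠ p.2.2.2)).toList.map
    (fun p =>
      Form.conj
        (Form.int (ltInt X V p.1 p.2.1.1) (Form.eq V p.2.2.1))
        (Form.int (ltInt X V p.1 p.2.1.2) (Form.eq V p.2.2.2))))

/-- The chain `X₀ ⇝ X₁ ∧ ⋯ ∧ X_k ⇝ X_{k+1}`. -/
noncomputable def chainConj (X : ℕ → S.Var) : ℕ → Form S
  | 0 => leadsTo (X 0) (X 1)
  | n + 1 => Form.conj (chainConj X n) (leadsTo (X (n + 1)) (X (n + 2)))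

/-- `ψ₁ → (ψ₂ → ⋯ → (ψₙ → φ))` for a list of premises. -/
def impsFrom : List (Form S) → Form S → Form S
  | [], φ => φ
  | ψ :: l, φ => Form.impl ψ (impsFrom l φ)

/-- Satisfaction of an L_KC formula at a pointed epistemic causal model
`(⟨F, T⟩, A)`. -/
def SatK : Form S → StructFuns S → Set (Env S) → Env S → Prop
  | Form.eq Y y, _, _, A => A Y = y
  | Form.neg φ, F, T, A => ¬ SatK φ F T A
  | Form.conj φ ψ, F, T, A => SatK φ F T A ∧ SatK ψ F T A
  | Form.know φ, F, T, _ => ∀ B ∈ T, SatK φ F T B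
  | Form.int I φ, F, T, A =>
      SatK φ (intF F I) ((fun B => intVal F B I) '' T) (intVal F A I)

/-- The proof system L_KC: the system L_C extended with the S5 principles for K
and the axioms CM and KL. -/
inductive ThmKC : Form S → Prop where
  | taut : ∀ {φ : Form S}, Tauto φ → ThmKC φ
  | mp : ∀ {φ ψ : Form S}, ThmKC (Form.impl φ ψ) → ThmKC φ → ThmKC ψ
  | a1 : ∀ (I : Intervention S) (Y : S.Var) (y y' : S.Val Y), y ≠ y' →
      ThmKC (Form.impl (Form.int I (Form.eq Y y)) (Form.neg (Form.int I (Form.eq Y y'))))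
  | a2 : ∀ (I : Intervention S) (Y : S.Var),
      ThmKC (bigOr (((Finset.univ : Finset (S.Val Y)).toList).map
        (fun y => Form.int I (Form.eq Y y))))
  | a3 : ∀ (I : Intervention S) (Y Z : S.Var) (y : S.Val Y) (z : S.Val Z),
      ThmKC (Form.impl (Form.conj (Form.int I (Form.eq Y y)) (Form.int I (Form.eq Z z)))
        (Form.int (iUpd I Y y) (Form.eq Z z)))
  | a4 : ∀ (I : Intervention S) (Y : S.Var) (y : S.Val Y),
      ThmKC (Form.int (iUpd I Y y) (Form.eq Y y))
  | a5 : ∀ (I : Intervention S) (Y Z : S.Var) (y : S.Val Y) (z : S.Val Z), Y ≠ Z →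
      ThmKC (Form.impl
        (Form.conj (Form.int (iUpd I Y y) (Form.eq Z z)) (Form.int (iUpd I Z z) (Form.eq Y y)))
        (Form.int I (Form.eq Z z)))
  | a6 : ∀ (X : ℕ → S.Var) (k : ℕ),
      (∀ i : ℕ, i ≤ k → X i ≠ X (i + 1)) → X (k + 1) ≠ X 0 →
      ThmKC (Form.impl (chainConj X k) (Form.neg (leadsTo (X (k + 1)) (X 0))))
  | a7 : ∀ (I : Intervention S) (U : S.Var) (u : S.Val U), S.exo U → I U = none →
      ThmKC (Form.iffF (Form.int (iEmpty S) (Form.eq U u)) (Form.int I (Form.eq U u)))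
  | aEmpty : ∀ (Y : S.Var) (y : S.Val Y),
      ThmKC (Form.iffF (Form.eq Y y) (Form.int (iEmpty S) (Form.eq Y y)))
  | aNeg : ∀ (I : Intervention S) (φ : Form S),
      ThmKC (Form.iffF (Form.int I (Form.neg φ)) (Form.neg (Form.int I φ)))
  | aConj : ∀ (I : Intervention S) (φ ψ : Form S),
      ThmKC (Form.iffF (Form.int I (Form.conj φ ψ))
        (Form.conj (Form.int I φ) (Form.int I ψ)))
  | aIntInt : ∀ (I J : Intervention S) (φ : Form S),
      ThmKC (Form.iffF (Form.int I (Form.int J φ)) (Form.int (icomp I J) φ))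
  | axK : ∀ (φ ψ : Form S),
      ThmKC (Form.impl (Form.know (Form.impl φ ψ))
        (Form.impl (Form.know φ) (Form.know ψ)))
  | necK : ∀ {φ : Form S}, ThmKC φ → ThmKC (Form.know φ)
  | axT : ∀ (φ : Form S), ThmKC (Form.impl (Form.know φ) φ)
  | ax4 : ∀ (φ : Form S), ThmKC (Form.impl (Form.know φ) (Form.know (Form.know φ)))
  | ax5 : ∀ (φ : Form S),
      ThmKC (Form.impl (Form.neg (Form.know φ)) (Form.know (Form.neg (Form.know φ))))
  | cm : ∀ (I : Intervention S) (φ : Form S),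
      ThmKC (Form.iffF (Form.int I (Form.know φ)) (Form.know (Form.int I φ)))
  | kl : ∀ (I : Intervention S) (Y : S.Var) (y : S.Val Y), ¬ S.exo Y →
      (∀ W : S.Var, (I W).isSome ↔ W ≠ Y) →
      ThmKC (Form.impl (Form.int I (Form.eq Y y))
        (Form.know (Form.int I (Form.eq Y y))))

/-- Strong derivability from a set of premises in L_KC. -/
def ProvKC (Γ : Set (Form S)) (φ : Form S) : Prop :=
  ∃ l : List (Form S), (∀ ψ ∈ l, ψ ∈ Γ) ∧ ThmKC (impsFrom l φ)

/-- The language L′_KC: formulas generated from `[X⃗:=x⃗]Y=y` by `¬`, `∧` and `K`. -/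
inductive IsKC' : Form S → Prop where
  | intEq : ∀ (I : Intervention S) (Y : S.Var) (y : S.Val Y),
      IsKC' (Form.int I (Form.eq Y y))
  | neg : ∀ {φ : Form S}, IsKC' φ → IsKC' (Form.neg φ)
  | conj : ∀ {φ ψ : Form S}, IsKC' φ → IsKC' ψ → IsKC' (Form.conj φ ψ)
  | know : ∀ {φ : Form S}, IsKC' φ → IsKC' (Form.know φ)

/-- The translation tr₂ from L_KC to L′_KC, given as a relation defined by the
recursive clauses of the definition (the theorem below asserts that it is well
defined, i.e. total and functional). -/
inductive Tr2 : Form S → Form S → Prop where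
  | eq : ∀ (Y : S.Var) (y : S.Val Y),
      Tr2 (Form.eq Y y) (Form.int (iEmpty S) (Form.eq Y y))
  | neg : ∀ {φ φ' : Form S}, Tr2 φ φ' → Tr2 (Form.neg φ) (Form.neg φ')
  | conj : ∀ {φ φ' ψ ψ' : Form S}, Tr2 φ φ' → Tr2 ψ ψ' →
      Tr2 (Form.conj φ ψ) (Form.conj φ' ψ')
  | know : ∀ {φ φ' : Form S}, Tr2 φ φ' → Tr2 (Form.know φ) (Form.know φ')
  | intEq : ∀ (I : Intervention S) (Y : S.Var) (y : S.Val Y),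
      Tr2 (Form.int I (Form.eq Y y)) (Form.int I (Form.eq Y y))
  | intNeg : ∀ {I : Intervention S} {φ χ : Form S},
      Tr2 (Form.neg (Form.int I φ)) χ → Tr2 (Form.int I (Form.neg φ)) χ
  | intConj : ∀ {I : Intervention S} {φ ψ χ : Form S},
      Tr2 (Form.conj (Form.int I φ) (Form.int I ψ)) χ →
      Tr2 (Form.int I (Form.conj φ ψ)) χ
  | intKnow : ∀ {I : Intervention S} {φ χ : Form S},
      Tr2 (Form.know (Form.int I φ)) χ → Tr2 (Form.int I (Form.know φ)) χ
  | intInt : ∀ {I J : Intervention S} {φ χ : Form S},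
      Tr2 (Form.int (icomp I J) φ) χ → Tr2 (Form.int I (Form.int J φ)) χ


/-! ### Auxiliary development -/

/-- A size measure that ignores interventions' contents. -/
def msize : Form S → ℕ
  | .eq _ _ => 1
  | .neg φ => msize φ + 1
  | .conj φ ψ => msize φ + msize ψ + 1
  | .know φ => msize φ + 1
  | .int _ φ => msize φ + 1

/-- The translation as a function. -/
def tr2f : Form S → Form S
  | .eq Y y => .int (iEmpty S) (.eq Y y)
  | .neg φ => .neg (tr2f φ)
  | .conj φ ψ => .conj (tr2f φ) (tr2f ψ)
  | .know φ => .know (tr2f φ)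
  | .int I (.eq Y y) => .int I (.eq Y y)
  | .int I (.neg φ) => .neg (tr2f (.int I φ))
  | .int I (.conj φ ψ) => .conj (tr2f (.int I φ)) (tr2f (.int I ψ))
  | .int I (.know φ) => .know (tr2f (.int I φ))
  | .int I (.int J φ) => tr2f (.int (icomp I J) φ)
termination_by ξ => msize ξ
decreasing_by all_goals (simp only [msize]; omega)

lemma tr2_tr2f : ∀ ξ : Form S, Tr2 ξ (tr2f ξ) := by
  intro ξ
  induction ξ using tr2f.induct with
  | case1 Y y => rw [tr2f]; exact Tr2.eq Y y
  | case2 φ ih => simpa [tr2f] using Tr2.neg ih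
  | case3 φ ψ ih1 ih2 => simpa [tr2f] using Tr2.conj ih1 ih2
  | case4 φ ih => simpa [tr2f] using Tr2.know ih
  | case5 I Y y => rw [tr2f]; exact Tr2.intEq I Y y
  | case6 I φ ih => simpa [tr2f] using Tr2.intNeg (Tr2.neg ih)
  | case7 I φ ψ ih1 ih2 => simpa [tr2f] using Tr2.intConj (Tr2.conj ih1 ih2)
  | case8 I φ ih => simpa [tr2f] using Tr2.intKnow (Tr2.know ih)
  | case9 I J φ ih => simpa [tr2f] using Tr2.intInt ih

lemma tr2_functional {ξ χ : Form S} (h : Tr2 ξ χ) : χ = tr2f ξ := by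
  induction h with
  | eq Y y => simp [tr2f]
  | neg _ ih => simp [tr2f, ih]
  | conj _ _ ih1 ih2 => simp [tr2f, ih1, ih2]
  | know _ ih => simp [tr2f, ih]
  | intEq I Y y => simp [tr2f]
  | intNeg _ ih => rw [ih]; simp [tr2f]
  | intConj _ ih => rw [ih]; simp [tr2f]
  | intKnow _ ih => rw [ih]; simp [tr2f]
  | intInt _ ih => rw [ih]; simp [tr2f]

lemma isKC'_tr2f : ∀ ξ : Form S, IsKC' (tr2f ξ) := by
  intro ξ
  induction ξ using tr2f.induct with
  | case1 Y y => rw [tr2f]; exact IsKC'.intEq _ Y y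
  | case2 φ ih => rw [tr2f]; exact IsKC'.neg ih
  | case3 φ ψ ih1 ih2 => rw [tr2f]; exact IsKC'.conj ih1 ih2
  | case4 φ ih => rw [tr2f]; exact IsKC'.know ih
  | case5 I Y y => rw [tr2f]; exact IsKC'.intEq I Y y
  | case6 I φ ih => rw [tr2f]; exact IsKC'.neg ih
  | case7 I φ ψ ih1 ih2 => rw [tr2f]; exact IsKC'.conj ih1 ih2
  | case8 I φ ih => rw [tr2f]; exact IsKC'.know ih
  | case9 I J φ ih => rw [tr2f]; exact ih

/-! ### Hilbert-style toolkit -/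

section Hilbert

variable {φ ψ χ φ' ψ' : Form S}

lemma thm_iff_intro (h1 : ThmKC (Form.impl φ ψ)) (h2 : ThmKC (Form.impl ψ φ)) :
    ThmKC (Form.iffF φ ψ) := by
  have t : ThmKC (Form.impl (Form.impl φ ψ) (Form.impl (Form.impl ψ φ) (Form.iffF φ ψ))) := by
    apply ThmKC.taut
    intro v hn hc
    simp only [Form.impl, Form.iffF, hn, hc]
    cases v φ <;> cases v ψ <;> simp
  exact ThmKC.mp (ThmKC.mp t h1) h2

lemma thm_iff_mp1 (h : ThmKC (Form.iffF φ ψ)) : ThmKC (Form.impl φ ψ) := by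
  have t : ThmKC (Form.impl (Form.iffF φ ψ) (Form.impl φ ψ)) := by
    apply ThmKC.taut
    intro v hn hc
    simp only [Form.impl, Form.iffF, hn, hc]
    cases v φ <;> cases v ψ <;> simp
  exact ThmKC.mp t h

lemma thm_iff_mp2 (h : ThmKC (Form.iffF φ ψ)) : ThmKC (Form.impl ψ φ) := by
  have t : ThmKC (Form.impl (Form.iffF φ ψ) (Form.impl ψ φ)) := by
    apply ThmKC.taut
    intro v hn hc
    simp only [Form.impl, Form.iffF, hn, hc]
    cases v φ <;> cases v ψ <;> simp
  exact ThmKC.mp t h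

lemma thm_iff_refl (φ : Form S) : ThmKC (Form.iffF φ φ) := by
  apply ThmKC.taut
  intro v hn hc
  simp only [Form.impl, Form.iffF, hn, hc]
  cases v φ <;> simp

lemma thm_iff_trans (h1 : ThmKC (Form.iffF φ ψ)) (h2 : ThmKC (Form.iffF ψ χ)) :
    ThmKC (Form.iffF φ χ) := by
  have t : ThmKC (Form.impl (Form.iffF φ ψ) (Form.impl (Form.iffF ψ χ) (Form.iffF φ χ))) := by
    apply ThmKC.taut
    intro v hn hc
    simp only [Form.impl, Form.iffF, hn, hc]
    cases v φ <;> cases v ψ <;> cases v χ <;> simp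
  exact ThmKC.mp (ThmKC.mp t h1) h2

lemma thm_iff_neg (h : ThmKC (Form.iffF φ ψ)) :
    ThmKC (Form.iffF (Form.neg φ) (Form.neg ψ)) := by
  have t : ThmKC (Form.impl (Form.iffF φ ψ) (Form.iffF (Form.neg φ) (Form.neg ψ))) := by
    apply ThmKC.taut
    intro v hn hc
    simp only [Form.impl, Form.iffF, hn, hc]
    cases v φ <;> cases v ψ <;> simp
  exact ThmKC.mp t h

lemma thm_iff_conj (h1 : ThmKC (Form.iffF φ φ')) (h2 : ThmKC (Form.iffF ψ ψ')) :
    ThmKC (Form.iffF (Form.conj φ ψ) (Form.conj φ' ψ')) := by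
  have t : ThmKC (Form.impl (Form.iffF φ φ') (Form.impl (Form.iffF ψ ψ')
      (Form.iffF (Form.conj φ ψ) (Form.conj φ' ψ')))) := by
    apply ThmKC.taut
    intro v hn hc
    simp only [Form.impl, Form.iffF, hn, hc]
    cases v φ <;> cases v φ' <;> cases v ψ <;> cases v ψ' <;> simp
  exact ThmKC.mp (ThmKC.mp t h1) h2

lemma thm_know_mono (h : ThmKC (Form.impl φ ψ)) :
    ThmKC (Form.impl (Form.know φ) (Form.know ψ)) :=
  ThmKC.mp (ThmKC.axK φ ψ) (ThmKC.necK h)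

lemma thm_iff_know (h : ThmKC (Form.iffF φ ψ)) :
    ThmKC (Form.iffF (Form.know φ) (Form.know ψ)) :=
  thm_iff_intro (thm_know_mono (thm_iff_mp1 h)) (thm_know_mono (thm_iff_mp2 h))

end Hilbert

lemma thm_tr2f : ∀ ξ : Form S, ThmKC (Form.iffF ξ (tr2f ξ)) := by
  intro ξ
  induction ξ using tr2f.induct with
  | case1 Y y => rw [tr2f]; exact ThmKC.aEmpty Y y
  | case2 φ ih => rw [tr2f]; exact thm_iff_neg ih
  | case3 φ ψ ih1 ih2 => rw [tr2f]; exact thm_iff_conj ih1 ih2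
  | case4 φ ih => rw [tr2f]; exact thm_iff_know ih
  | case5 I Y y => rw [tr2f]; exact thm_iff_refl _
  | case6 I φ ih => rw [tr2f]; exact thm_iff_trans (ThmKC.aNeg I φ) (thm_iff_neg ih)
  | case7 I φ ψ ih1 ih2 => rw [tr2f]; exact thm_iff_trans (ThmKC.aConj I φ ψ) (thm_iff_conj ih1 ih2)
  | case8 I φ ih => rw [tr2f]; exact thm_iff_trans (ThmKC.cm I φ) (thm_iff_know ih)
  | case9 I J φ ih => rw [tr2f]; exact thm_iff_trans (ThmKC.aIntInt I J φ) ih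

/-! ### Semantics of recursive models -/

lemma dirAff_intF {F : StructFuns S} {I : Intervention S} {X V : S.Var}
    (h : DirAff (intF F I) X V) : DirAff F X V := by
  obtain ⟨hV, hne, g, x₁, x₂, hx, hF⟩ := h
  refine ⟨hV, hne, g, x₁, x₂, hx, ?_⟩
  intro hcon
  apply hF
  cases hIV : I V <;> simp [intF, hIV, hcon]

lemma recursive_intF {F : StructFuns S} (hF : RecursiveF F) (I : Intervention S) :
    RecursiveF (intF F I) := by
  intro a b hab hba
  exact hF a b (Relation.TransGen.mono (r := DirAff (intF F I)) (p := DirAff F) (fun _ _ => dirAff_intF) _ _ hab)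
    (Relation.TransGen.mono (r := DirAff (intF F I)) (p := DirAff F) (fun _ _ => dirAff_intF) _ _ hba)

lemma wf_dirAff {F : StructFuns S} (hF : RecursiveF F) : WellFounded (DirAff F) := by
  have hirr : ∀ a : S.Var, ¬ Relation.TransGen (DirAff F) a a := fun a h => hF a a h h
  have : IsIrrefl S.Var (Relation.TransGen (DirAff F)) := ⟨hirr⟩
  have : IsTrans S.Var (Relation.TransGen (DirAff F)) :=
    ⟨fun _ _ _ => Relation.TransGen.trans⟩
  have hwf : WellFounded (Relation.TransGen (DirAff F)) :=
    Finite.wellFounded_of_trans_of_irrefl _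
  exact Subrelation.wf (fun h => Relation.TransGen.single h) hwf

/-- A structural function depends only on the variables that directly affect it. -/
lemma depends_only {F : StructFuns S} {V : S.Var} (hV : ¬ S.exo V) :
    ∀ (g g' : Others S V),
      (∀ X : {X : S.Var // X ≠ V}, DirAff F X.val V → g X = g' X) → F V g = F V g' := by
  have key : ∀ (n : ℕ) (g g' : Others S V),
      (Finset.univ.filter (fun X : {X : S.Var // X ≠ V} => g X ≠ g' X)).card ≤ n →
      (∀ X : {X : S.Var // X ≠ V}, DirAff F X.val V → g X = g' X) → F V g = F V g' := by
    intro n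
    induction n with
    | zero =>
      intro g g' hcard _
      have : ∀ X : {X : S.Var // X ≠ V}, g X = g' X := by
        intro X
        by_contra hX
        have : X ∈ Finset.univ.filter (fun X : {X : S.Var // X ≠ V} => g X ≠ g' X) := by
          simp [hX]
        have := Finset.card_pos.mpr ⟨X, this⟩
        omega
      exact congrArg (F V) (funext this)
    | succ n ih =>
      intro g g' hcard hagree
      by_cases hgg : ∀ X : {X : S.Var // X ≠ V}, g X = g' X
      · exact congrArg (F V) (funext hgg)
      · push_neg at hgg
        obtain ⟨X₀, hX₀⟩ := hgg
        have hnaff : ¬ DirAff F X₀.val V := fun h => hX₀ (hagree X₀ h)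
        set g'' := Function.update g X₀ (g' X₀) with hg''
        have hstep : F V g = F V g'' := by
          by_contra hcon
          apply hnaff
          exact ⟨hV, X₀.prop, g, g X₀, g' X₀, hX₀,
            show F V (Function.update g X₀ (g X₀)) ≠ F V (Function.update g X₀ (g' X₀)) from by
              rw [Function.update_eq_self]; exact hcon⟩
        rw [hstep]
        apply ih
        · have hsub : (Finset.univ.filter (fun X : {X : S.Var // X ≠ V} => g'' X ≠ g' X)) ⊆
              (Finset.univ.filter (fun X : {X : S.Var // X ≠ V} => g X ≠ g' X)).erase X₀ := by
            intro X hX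
            simp only [Finset.mem_filter, Finset.mem_univ, true_and] at hX
            rcases eq_or_ne X X₀ with h | hne
            · exfalso; apply hX; rw [h, hg'', Function.update_self]
            · refine Finset.mem_erase.mpr ⟨hne, ?_⟩
              simp only [Finset.mem_filter, Finset.mem_univ, true_and]
              rwa [hg'', Function.update_of_ne hne] at hX
          calc (Finset.univ.filter (fun X : {X : S.Var // X ≠ V} => g'' X ≠ g' X)).card
              ≤ ((Finset.univ.filter (fun X : {X : S.Var // X ≠ V} => g X ≠ g' X)).erase X₀).card :=
                Finset.card_le_card hsub
            _ ≤ n := by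
                have hmem : X₀ ∈ Finset.univ.filter
                    (fun X : {X : S.Var // X ≠ V} => g X ≠ g' X) := by simp [hX₀]
                have := Finset.card_erase_of_mem hmem
                omega
        · intro X hX
          rcases eq_or_ne X X₀ with h | hne
          · exact absurd (h ▸ hX) hnaff
          · rw [hg'', Function.update_of_ne hne]
            exact hagree X hX
  intro g g' h
  exact key _ g g' le_rfl h

/-- Existence of intervened valuations for recursive families. -/
lemma intervenedVal_exists {F : StructFuns S} (hF : RecursiveF F) (A : Env S)
    (I : Intervention S) : ∃ A' : Env S, IntervenedVal F A I A' := by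
  classical
  set G := intF F I with hG
  have hGrec : RecursiveF G := recursive_intF hF I
  have hwf : WellFounded (DirAff G) := wf_dirAff hGrec
  set e : Env S := fun X => (I X).getD (A X) with he
  set D : Env S := Classical.arbitrary (Env S) with hD
  set A' : Env S := hwf.fix (fun V rec =>
    if S.exo V then e V
    else G V (fun X => if h : DirAff G X.val V then rec X.val h else D X.val)) with hA'
  have hfix : ∀ V : S.Var, A' V =
      if S.exo V then e V
      else G V (fun X => if h : DirAff G X.val V then A' X.val else D X.val) := by
    intro V
    rw [hA', WellFounded.fix_eq]
  have hendo : ∀ V : S.Var, ¬ S.exo V → A' V = G V (A'.restrict V) := by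
    intro V hV
    rw [hfix V, if_neg hV]
    apply depends_only hV
    intro X hX
    simp [hX, Env.restrict]
  refine ⟨A', ?_, ?_, ?_⟩
  · intro X hX v hv
    rw [hfix X, if_pos hX, he]; simp [hv]
  · intro X hX hv
    rw [hfix X, if_pos hX, he]; simp [hv]
  · exact hendo

/-- Uniqueness of intervened valuations for recursive families. -/
lemma intervenedVal_unique {F : StructFuns S} (hF : RecursiveF F) {A : Env S}
    {I : Intervention S} {A' A'' : Env S}
    (h' : IntervenedVal F A I A') (h'' : IntervenedVal F A I A'') : A' = A'' := by
  have hwf : WellFounded (DirAff (intF F I)) := wf_dirAff (recursive_intF hF I)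
  funext V
  induction V using hwf.induction with
  | _ V ih =>
    by_cases hV : S.exo V
    · cases hIV : I V with
      | some v => rw [h'.1 V hV v hIV, h''.1 V hV v hIV]
      | none => rw [h'.2.1 V hV hIV, h''.2.1 V hV hIV]
    · rw [h'.2.2 V hV, h''.2.2 V hV]
      exact depends_only hV _ _ (fun X hX => ih X.val hX)

lemma intVal_spec {F : StructFuns S} (hF : RecursiveF F) (A : Env S) (I : Intervention S) :
    IntervenedVal F A I (intVal F A I) :=
  Classical.epsilon_spec (intervenedVal_exists hF A I)

lemma intVal_eq {F : StructFuns S} (hF : RecursiveF F) {A B : Env S} {I : Intervention S}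
    (h : IntervenedVal F A I B) : intVal F A I = B :=
  intervenedVal_unique hF (intVal_spec hF A I) h

lemma intVal_empty {F : StructFuns S} (hF : RecursiveF F) {A : Env S} (hA : Complies F A) :
    intVal F A (iEmpty S) = A := by
  apply intVal_eq hF
  refine ⟨?_, ?_, ?_⟩
  · intro X _ v hv; simp [iEmpty] at hv
  · intro X _ _; rfl
  · intro V hV; simpa [intF, iEmpty] using hA V hV

lemma intF_intF (F : StructFuns S) (I J : Intervention S) :
    intF (intF F I) J = intF F (icomp I J) := by
  funext V g
  cases hJ : J V <;> simp [intF, icomp, hJ]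

lemma intVal_comp {F : StructFuns S} (hF : RecursiveF F) (A : Env S) (I J : Intervention S) :
    intVal (intF F I) (intVal F A I) J = intVal F A (icomp I J) := by
  have h1 := intVal_spec hF A I
  have h2 := intVal_spec hF A (icomp I J)
  apply intVal_eq (recursive_intF hF I)
  refine ⟨?_, ?_, ?_⟩
  · intro X hX v hv
    exact h2.1 X hX v (by simp [icomp, hv])
  · intro X hX hv
    cases hIX : I X with
    | some w =>
      rw [h2.1 X hX w (by simp [icomp, hv, hIX]), h1.1 X hX w hIX]
    | none =>
      rw [h2.2.1 X hX (by simp [icomp, hv, hIX]), h1.2.1 X hX hIX]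
  · intro V hV
    rw [intF_intF]
    exact h2.2.2 V hV

lemma satK_tr2f : ∀ ξ : Form S, ∀ (F : StructFuns S) (T : Set (Env S)) (A : Env S),
    RecursiveF F → (∀ B ∈ T, Complies F B) → A ∈ T →
    (SatK ξ F T A ↔ SatK (tr2f ξ) F T A) := by
  intro ξ
  induction ξ using tr2f.induct with
  | case1 Y y =>
    intro F T A hF hT hA
    rw [tr2f]
    simp only [SatK]
    rw [intVal_empty hF (hT A hA)]
  | case2 φ ih =>
    intro F T A hF hT hA
    rw [tr2f]
    simp only [SatK]
    rw [ih F T A hF hT hA]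
  | case3 φ ψ ih1 ih2 =>
    intro F T A hF hT hA
    rw [tr2f]
    simp only [SatK]
    rw [ih1 F T A hF hT hA, ih2 F T A hF hT hA]
  | case4 φ ih =>
    intro F T A hF hT hA
    rw [tr2f]
    simp only [SatK]
    exact forall₂_congr fun B hB => ih F T B hF hT hB
  | case5 I Y y =>
    intro F T A hF hT hA
    rw [tr2f]
  | case6 I φ ih =>
    intro F T A hF hT hA
    rw [tr2f]
    simp only [SatK]
    rw [show (¬ SatK φ (intF F I) ((fun B => intVal F B I) '' T) (intVal F A I)) =
      ¬ SatK (Form.int I φ) F T A from rfl]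
    rw [ih F T A hF hT hA]
  | case7 I φ ψ ih1 ih2 =>
    intro F T A hF hT hA
    rw [tr2f]
    simp only [SatK]
    rw [show SatK φ (intF F I) ((fun B => intVal F B I) '' T) (intVal F A I) =
      SatK (Form.int I φ) F T A from rfl]
    rw [show SatK ψ (intF F I) ((fun B => intVal F B I) '' T) (intVal F A I) =
      SatK (Form.int I ψ) F T A from rfl]
    rw [ih1 F T A hF hT hA, ih2 F T A hF hT hA]
  | case8 I φ ih =>
    intro F T A hF hT hA
    rw [tr2f]
    simp only [SatK]
    constructor
    · intro h B hB
      exact (ih F T B hF hT hB).mp (h _ ⟨B, hB, rfl⟩)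
    · intro h B' hB'
      obtain ⟨B, hB, rfl⟩ := hB'
      exact (ih F T B hF hT hB).mpr (h B hB)
  | case9 I J φ ih =>
    intro F T A hF hT hA
    rw [tr2f]
    have heq : SatK (Form.int I (Form.int J φ)) F T A ↔
        SatK (Form.int (icomp I J) φ) F T A := by
      simp only [SatK]
      rw [intF_intF, intVal_comp hF A I J, Set.image_image]
      have : (fun B => intVal (intF F I) (intVal F B I) J) '' T =
          (fun B => intVal F B (icomp I J)) '' T := by
        apply Set.image_congr
        intro B _
        exact intVal_comp hF B I J
      rw [this]
    exact heq.trans (ih F T A hF hT hA)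

/-- Theorem: the translation tr₂ is well defined (it assigns to each L_KC formula a
unique translation) and, for every L_KC formula `ξ`: (1) `tr₂(ξ)` is an L′_KC
formula; (2) `ξ ↔ tr₂(ξ)` is provable in the system L_KC; (3) `ξ ↔ tr₂(ξ)` is
valid over epistemic (recursive) causal models. -/
theorem tr2_well_defined_and_correct (S : Sig) (ξ : Form S) :
    (∃! ξ' : Form S, Tr2 ξ ξ') ∧
      ∀ ξ' : Form S, Tr2 ξ ξ' →
        IsKC' ξ' ∧
        ThmKC (Form.iffF ξ ξ') ∧
        ∀ (F : StructFuns S) (T : Set (Env S)) (A : Env S),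
          RecursiveF F → T.Nonempty → (∀ B ∈ T, Complies F B) → A ∈ T →
          (SatK ξ F T A ↔ SatK ξ' F T A) := by
  constructor
  · exact ⟨tr2f ξ, tr2_tr2f ξ, fun χ h => (tr2_functional h)⟩
  · intro ξ' h
    obtain rfl : ξ' = tr2f ξ := tr2_functional h
    refine ⟨isKC'_tr2f ξ, thm_tr2f ξ, ?_⟩
    intro F T A hF _ hT hA
    exact satK_tr2f ξ F T A hF hT hA
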